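/- Let AV_{k+1}K̲_k = V_{k+1}H̲_k be a block rational Arnoldi decomposition whose k-th (last) pole is infinite, i.e., the last b×b block row of K̲_k vanishes. Then the leading bk×bk principal submatrix K_k of K̲_k is invertible and the projected matrix satisfies V_k^H A V_k = H_k K_k^{-1}, where V_k consists of the first bk columns of V_{k+1} and H_k is the leading bk×bk principal submatrix of H̲_k. -/
import Mathlib


open Matrix

/-- The `i`-th subdiagonal `b×b` block of a `b(k+1) × bk` block matrix. -/
def subBlk {k b : ℕ} (K : Matrix (Fin (k + 1) × Fin b) (Fin k × Fin b) ℂ) (i : Fin k) :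
    Matrix (Fin b) (Fin b) ℂ :=
  Matrix.of fun s t => K (i.succ, s) (i, t)

/-- Block upper Hessenberg: all blocks strictly below the first block subdiagonal vanish. -/
def BlockHessenberg {k b : ℕ} (K : Matrix (Fin (k + 1) × Fin b) (Fin k × Fin b) ℂ) : Prop :=
  ∀ (i : Fin (k + 1)) (j : Fin k), (j : ℕ) + 1 < (i : ℕ) → ∀ s t, K (i, s) (j, t) = 0

/-- The leading `bk × bk` principal (block) submatrix of a `b(k+1) × bk` block matrix. -/
def headBlk {k b : ℕ} (K : Matrix (Fin (k + 1) × Fin b) (Fin k × Fin b) ℂ) :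
    Matrix (Fin k × Fin b) (Fin k × Fin b) ℂ :=
  K.submatrix (fun p => (p.1.castSucc, p.2)) id

lemma unit_mulVec_eq_zero {m : ℕ} {M : Matrix (Fin m) (Fin m) ℂ} (hM : IsUnit M)
    {v : Fin m → ℂ} (hv : M *ᵥ v = 0) : v = 0 := by
  have hd : IsUnit M.det := (Matrix.isUnit_iff_isUnit_det M).mp hM
  have h1 : M⁻¹ *ᵥ (M *ᵥ v) = v := by
    rw [Matrix.mulVec_mulVec, Matrix.nonsing_inv_mul M hd, Matrix.one_mulVec]
  rw [hv, Matrix.mulVec_zero] at h1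
  exact h1.symm

lemma row_extract {k b : ℕ} (M : Matrix (Fin (k + 1) × Fin b) (Fin k × Fin b) ℂ)
    (hM : BlockHessenberg M) (x : Fin k × Fin b → ℂ) (i : Fin k)
    (hz : ∀ j : Fin k, (i : ℕ) < (j : ℕ) → ∀ t, x (j, t) = 0) (s : Fin b) :
    (M *ᵥ x) (i.succ, s) = (subBlk M i *ᵥ fun t => x (i, t)) s := by
  simp only [Matrix.mulVec, dotProduct, Fintype.sum_prod_type, subBlk, Matrix.of_apply]
  rw [Finset.sum_eq_single i]
  · intro j _ hj
    rcases lt_or_gt_of_ne (fun h : (j:ℕ) = (i:ℕ) => hj (Fin.ext h)) with h | h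
    · apply Finset.sum_eq_zero; intro t _
      rw [hM i.succ j (by simp [Fin.val_succ]; omega) s t, zero_mul]
    · apply Finset.sum_eq_zero; intro t _
      rw [hz j h t, mul_zero]
  · intro h; exact absurd (Finset.mem_univ i) h

lemma ker_lemma {k b : ℕ} (K H : Matrix (Fin (k + 1) × Fin b) (Fin k × Fin b) ℂ)
    (hKhess : BlockHessenberg K) (hHhess : BlockHessenberg H)
    (hsub : ∀ i : Fin k, IsUnit (subBlk K i) ∨ IsUnit (subBlk H i))
    (x : Fin k × Fin b → ℂ) (hxK : K *ᵥ x = 0) (hxH : H *ᵥ x = 0) : x = 0 := by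
  have main : ∀ m : ℕ, ∀ i : Fin k, k - (i : ℕ) ≤ m → ∀ s, x (i, s) = 0 := by
    intro m
    induction m with
    | zero => intro i h; have := i.isLt; omega
    | succ m ih =>
      intro i hi s
      have hz : ∀ j : Fin k, (i : ℕ) < (j : ℕ) → ∀ t, x (j, t) = 0 := by
        intro j hj t
        exact ih j (by have := j.isLt; omega) t
      have hK0 : subBlk K i *ᵥ (fun t => x (i, t)) = 0 := by
        funext t
        have := row_extract K hKhess x i hz t
        rw [hxK] at this
        exact this.symm ▸ rfl
      have hH0 : subBlk H i *ᵥ (fun t => x (i, t)) = 0 := by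
        funext t
        have := row_extract H hHhess x i hz t
        rw [hxH] at this
        exact this.symm ▸ rfl
      rcases hsub i with h | h
      · exact congrFun (unit_mulVec_eq_zero h hK0) s
      · exact congrFun (unit_mulVec_eq_zero h hH0) s
  funext p
  obtain ⟨i, s⟩ := p
  exact main k i (by omega) s

/-- For a block rational Arnoldi decomposition `A V_{k+1} K̲ = V_{k+1} H̲` whose last pole is
infinite (the last block row of `K̲` vanishes), the leading principal submatrix `K_k` is
invertible and the projected matrix satisfies `V_kᴴ A V_k = H_k K_k⁻¹`. -/
theorem brad_infinite_last_pole_projection {n k b : ℕ}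
    (A : Matrix (Fin n) (Fin n) ℂ)
    (V : Matrix (Fin n) (Fin (k + 1) × Fin b) ℂ)
    (K H : Matrix (Fin (k + 1) × Fin b) (Fin k × Fin b) ℂ)
    (horth : Vᴴ * V = 1)
    (hbrad : A * (V * K) = V * H)
    (hKhess : BlockHessenberg K) (hHhess : BlockHessenberg H)
    (hsub : ∀ i : Fin k, IsUnit (subBlk K i) ∨ IsUnit (subBlk H i))
    (μ ν : Fin k → ℂ)
    (hμν : ∀ i : Fin k, (μ i ≠ 0 ∨ ν i ≠ 0) ∧ μ i • subBlk K i = ν i • subBlk H i)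
    (hpoles : ∀ i : Fin k, ν i ≠ 0 → μ i / ν i ∉ spectrum ℂ A)
    (hlast : ∀ (j : Fin k) (s t : Fin b), K (Fin.last k, s) (j, t) = 0) :
    IsUnit (headBlk K) ∧
      (V.submatrix id fun p : Fin k × Fin b => (p.1.castSucc, p.2))ᴴ * A *
          (V.submatrix id fun p : Fin k × Fin b => (p.1.castSucc, p.2))
        = headBlk H * (headBlk K)⁻¹ := by
  set W := V.submatrix id fun p : Fin k × Fin b => (p.1.castSucc, p.2) with hW
  -- V * K = W * headBlk K
  have hVK : V * K = W * headBlk K := by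
    ext r c
    obtain ⟨j, t⟩ := c
    simp only [Matrix.mul_apply, hW, Matrix.submatrix_apply, headBlk, id_eq,
      Fintype.sum_prod_type]
    rw [Fin.sum_univ_castSucc]
    simp [hlast]
  -- kernel argument
  have hker : ∀ x : Fin k × Fin b → ℂ, headBlk K *ᵥ x = 0 → x = 0 := by
    intro x hx
    have hKx : K *ᵥ x = 0 := by
      funext p
      obtain ⟨i, s⟩ := p
      induction i using Fin.lastCases with
      | last =>
        simp only [Matrix.mulVec, dotProduct]
        apply Finset.sum_eq_zero
        intro q _
        obtain ⟨j, t⟩ := q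
        rw [hlast j s t, zero_mul]
      | cast i =>
        have := congrFun hx (i, s)
        simpa [Matrix.mulVec, dotProduct, headBlk] using this
    have hHx : H *ᵥ x = 0 := by
      have h1 : (A * (V * K)) *ᵥ x = (V * H) *ᵥ x := by rw [hbrad]
      have h2 : (V * H) *ᵥ x = 0 := by
        rw [← h1, ← Matrix.mulVec_mulVec, ← Matrix.mulVec_mulVec, hKx,
          Matrix.mulVec_zero, Matrix.mulVec_zero]
      have h3 : (Vᴴ * (V * H)) *ᵥ x = 0 := by
        rw [← Matrix.mulVec_mulVec, h2, Matrix.mulVec_zero]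
      rwa [← Matrix.mul_assoc, horth, Matrix.one_mul] at h3
    exact ker_lemma K H hKhess hHhess hsub x hKx hHx
  have hdet : (headBlk K).det ≠ 0 := by
    intro hd
    obtain ⟨v, hv, hv0⟩ := (Matrix.exists_mulVec_eq_zero_iff).mpr hd
    exact hv (hker v hv0)
  have hKunit : IsUnit (headBlk K) := by
    rw [Matrix.isUnit_iff_isUnit_det]
    exact isUnit_iff_ne_zero.mpr hdet
  refine ⟨hKunit, ?_⟩
  -- Wᴴ * V * H = headBlk H
  have hWV : Wᴴ * V = (1 : Matrix (Fin (k+1) × Fin b) (Fin (k+1) × Fin b) ℂ).submatrix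
      (fun p : Fin k × Fin b => (p.1.castSucc, p.2)) id := by
    rw [hW, Matrix.conjTranspose_submatrix]
    have : Vᴴ.submatrix (fun p : Fin k × Fin b => (p.1.castSucc, p.2)) id * V
        = (Vᴴ * V).submatrix (fun p : Fin k × Fin b => (p.1.castSucc, p.2)) id := by
      ext p c
      simp [Matrix.mul_apply, Matrix.submatrix_apply]
    rw [this, horth]
  have hWH : Wᴴ * (V * H) = headBlk H := by
    rw [← Matrix.mul_assoc, hWV]
    ext p c
    simp only [Matrix.mul_apply, Matrix.submatrix_apply, Matrix.one_apply, headBlk, id_eq,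
      ite_mul, one_mul, zero_mul]
    rw [Finset.sum_ite_eq]
    simp
  have hmain : Wᴴ * A * W * headBlk K = headBlk H := by
    rw [Matrix.mul_assoc (Wᴴ * A), ← hVK, Matrix.mul_assoc, hbrad, hWH]
  calc Wᴴ * A * W = Wᴴ * A * W * (headBlk K * (headBlk K)⁻¹) := by
        rw [Matrix.mul_nonsing_inv _ ((Matrix.isUnit_iff_isUnit_det _).mp hKunit),
          Matrix.mul_one]
    _ = headBlk H * (headBlk K)⁻¹ := by rw [← Matrix.mul_assoc, hmain]
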